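/- Let p : K → J be a surjective equivariant map of finite G-sets. Define p̄ : P(K) → P(J) by p̄(U) = J ∖ p(K ∖ U). Then p̄ is an order-preserving G-equivariant map, it restricts to a functor P(K) ∖ {K} → P(J) ∖ {J}, and this restriction is right G-cofinal: for every subgroup H ≤ G and every H-invariant proper subset U ⊊ J, the H-fixed under-poset (U/p̄)^H = {V ⊊ K : V H-invariant, U ⊆ p̄(V)} has K ∖ p^{-1}(J ∖ U) as an initial object. -/

import Mathlib

open Pointwise

/-- For a surjective equivariant map `p : K → J` of finite `G`-sets, the
complement-dual direct image `p̄(U) = J ∖ p(K ∖ U)` is order-preserving and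
`G`-equivariant, restricts to proper subsets, and the restriction
`P(K)∖{K} → P(J)∖{J}` is right `G`-cofinal: for every subgroup `H ≤ G` and every
`H`-invariant proper `U ⊊ J`, the `H`-fixed under-poset of `H`-invariant proper `V ⊊ K`
with `U ⊆ p̄(V)` has `K ∖ p⁻¹(J ∖ U)` as a least (initial) element. -/
theorem pbar_right_cofinal {G K J : Type} [Group G] [Finite K] [Finite J]
    [MulAction G K] [MulAction G J] (p : K → J) (hsurj : Function.Surjective p)
    (hequiv : ∀ (g : G) (k : K), p (g • k) = g • p k) :
    (Monotone fun U : Set K => (p '' Uᶜ)ᶜ) ∧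
    (∀ (g : G) (U : Set K), (p '' (g • U)ᶜ)ᶜ = g • (p '' Uᶜ)ᶜ) ∧
    (∀ U : Set K, U ≠ Set.univ → (p '' Uᶜ)ᶜ ≠ Set.univ) ∧
    (∀ (H : Subgroup G) (U : Set J), U ≠ Set.univ → (∀ h : H, (h : G) • U = U) →
      IsLeast {V : Set K | V ≠ Set.univ ∧ (∀ h : H, (h : G) • V = V) ∧ U ⊆ (p '' Vᶜ)ᶜ}
        (p ⁻¹' Uᶜ)ᶜ) := by
  have himg : ∀ (g : G) (S : Set K), p '' (g • S) = g • (p '' S) := by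
    intro g S
    ext j
    constructor
    · rintro ⟨k, ⟨k', hk', rfl⟩, rfl⟩
      exact ⟨p k', ⟨k', hk', rfl⟩, (hequiv g k').symm⟩
    · rintro ⟨j', ⟨k', hk', rfl⟩, rfl⟩
      exact ⟨g • k', ⟨k', hk', rfl⟩, hequiv g k'⟩
  refine ⟨?_, ?_, ?_, ?_⟩
  · intro U V hUV
    exact Set.compl_subset_compl.2 (Set.image_mono (Set.compl_subset_compl.2 hUV))
  · intro g U
    rw [← Set.smul_set_compl, himg, Set.smul_set_compl]
  · intro U hU h
    obtain ⟨k, hk⟩ := (Set.ne_univ_iff_exists_notMem U).1 hU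
    have : p k ∈ (p '' Uᶜ)ᶜ := h ▸ Set.mem_univ _
    exact this ⟨k, hk, rfl⟩
  · intro H U hU hinv
    constructor
    · refine ⟨?_, ?_, ?_⟩
      · obtain ⟨j, hj⟩ := (Set.ne_univ_iff_exists_notMem U).1 hU
        obtain ⟨k, rfl⟩ := hsurj j
        exact (Set.ne_univ_iff_exists_notMem _).2 ⟨k, fun hk => hk hj⟩
      · intro h
        have hpre : ∀ (g : G) (S : Set J), g • (p ⁻¹' S) = p ⁻¹' (g • S) := by
          intro g S
          ext k
          constructor
          · rintro ⟨k', hk', rfl⟩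
            exact ⟨p k', hk', (hequiv g k').symm⟩
          · rintro ⟨j, hj, hjk⟩
            refine ⟨g⁻¹ • k, ?_, by simp⟩
            have : p (g⁻¹ • k) = g⁻¹ • p k := hequiv g⁻¹ k
            rw [Set.mem_preimage, this, ← hjk]
            simpa using hj
        rw [Set.smul_set_compl, hpre, Set.smul_set_compl, hinv h]
      · intro j hj ⟨k, hk, hpk⟩
        simp only [compl_compl, Set.mem_preimage, Set.mem_compl_iff] at hk
        exact hk (by rw [hpk]; exact hj)
    · rintro V ⟨_, _, hUV⟩ k hk
      by_contra hkV
      exact (hUV (Set.not_notMem.1 hk)) ⟨k, hkV, rfl⟩
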